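/- The best constant c in the inequality ‖∇u‖_∞ ≤ c·|Ω|^{1/2}, valid for all bounded convex planar Ω with u the torsion function (-Δu = 1, u = 0 on ∂Ω), satisfies c ≥ 3^{3/4}/(4√π). -/

import Mathlib

open Real MeasureTheory

noncomputable def planeLaplacian (u : EuclideanSpace ℝ (Fin 2) → ℝ)
    (x : EuclideanSpace ℝ (Fin 2)) : ℝ :=
  ∑ i : Fin 2, fderiv ℝ (fun y => fderiv ℝ u y (EuclideanSpace.single i 1)) x
    (EuclideanSpace.single i 1)

section TorsionAux

local notation "E2" => EuclideanSpace ℝ (Fin 2)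

/-- The torsion function of the ellipse `3x² + y² < 8`. -/
noncomputable def uu : E2 → ℝ := fun x => 1 - ((3/8) * (x 0 * x 0) + (1/8) * (x 1 * x 1))

noncomputable def DD (p : E2) : E2 →L[ℝ] ℝ :=
  (0 : E2 →L[ℝ] ℝ) - ((3/8:ℝ) • (p 0 • EuclideanSpace.proj (𝕜 := ℝ) 0 + p 0 • EuclideanSpace.proj (𝕜 := ℝ) 0)
    + (1/8:ℝ) • (p 1 • EuclideanSpace.proj (𝕜 := ℝ) 1 + p 1 • EuclideanSpace.proj (𝕜 := ℝ) 1))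

lemma hasD (p : E2) : HasFDerivAt uu (DD p) p := by
  have h1 : HasFDerivAt (fun x : E2 => x 0) (EuclideanSpace.proj (𝕜 := ℝ) 0) p :=
    (EuclideanSpace.proj (𝕜 := ℝ) (0 : Fin 2)).hasFDerivAt
  have h1' : HasFDerivAt (fun x : E2 => x 1) (EuclideanSpace.proj (𝕜 := ℝ) 1) p :=
    (EuclideanSpace.proj (𝕜 := ℝ) (1 : Fin 2)).hasFDerivAt
  exact (hasFDerivAt_const (1:ℝ) p).sub (((h1.mul h1).const_mul (3/8:ℝ)).add ((h1'.mul h1').const_mul (1/8:ℝ)))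

lemma fderiv_uu (p : E2) (i : Fin 2) :
    fderiv ℝ uu p (EuclideanSpace.single i 1) = -(if i = 0 then (3/4) * p 0 else (1/4) * p 1) := by
  rw [(hasD p).fderiv]
  fin_cases i <;>
    simp [DD, EuclideanSpace.single_apply] <;> ring

lemma lap_term (x : E2) (i : Fin 2) (cf : ℝ)
    (hif : (fun y : E2 => fderiv ℝ uu y (EuclideanSpace.single i 1)) = fun y : E2 => -(cf * y i)) :
    fderiv ℝ (fun y => fderiv ℝ uu y (EuclideanSpace.single i 1)) x
      (EuclideanSpace.single i 1) = -cf := by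
  rw [hif]
  have h1 : HasFDerivAt (fun y : E2 => -(cf * y i))
      (-(cf • EuclideanSpace.proj (𝕜 := ℝ) i)) x :=
    (((EuclideanSpace.proj (𝕜 := ℝ) i).hasFDerivAt).const_mul cf).neg
  rw [h1.fderiv]
  simp [EuclideanSpace.single_apply]

lemma lap_uu (x : E2) : -planeLaplacian uu x = 1 := by
  have k0 := lap_term x 0 (3/4) (by funext y; rw [fderiv_uu y 0]; simp)
  have k1 := lap_term x 1 (1/4) (by funext y; rw [fderiv_uu y 1]; simp)
  rw [planeLaplacian, Fin.sum_univ_two, k0, k1]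
  norm_num

/-- The ellipse `3x² + y² < 8`. -/
noncomputable def Om : Set E2 := {x : E2 | 3 * (x 0 * x 0) + x 1 * x 1 < 8}

lemma q_cont : Continuous (fun x : E2 => 3 * (x 0 * x 0) + x 1 * x 1) := by
  have h0 := (EuclideanSpace.proj (𝕜 := ℝ) (0 : Fin 2)).continuous
  have h1 := (EuclideanSpace.proj (𝕜 := ℝ) (1 : Fin 2)).continuous
  exact ((continuous_const.mul (h0.mul h0)).add (h1.mul h1))

lemma Om_open : IsOpen Om := isOpen_lt q_cont continuous_const

lemma Om_convex : Convex ℝ Om := by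
  have hsq : ConvexOn ℝ (Set.univ : Set ℝ) (fun t : ℝ => t ^ 2) :=
    Even.convexOn_pow (by norm_num)
  have h0 : ConvexOn ℝ (Set.univ : Set E2) (fun x : E2 => (x 0) ^ 2) := by
    have := hsq.comp_affineMap ((EuclideanSpace.projₗ (𝕜 := ℝ) (0 : Fin 2)).toAffineMap)
    exact this
  have h1 : ConvexOn ℝ (Set.univ : Set E2) (fun x : E2 => (x 1) ^ 2) := by
    have := hsq.comp_affineMap ((EuclideanSpace.projₗ (𝕜 := ℝ) (1 : Fin 2)).toAffineMap)
    exact this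
  have hq : ConvexOn ℝ (Set.univ : Set E2) (fun x : E2 => 3 * (x 0 * x 0) + x 1 * x 1) := by
    have h := (h0.smul (by norm_num : (0:ℝ) ≤ 3)).add h1
    have heq : (fun x : E2 => 3 * (x 0 * x 0) + x 1 * x 1)
        = fun x : E2 => (3:ℝ) • (x 0) ^ 2 + (x 1) ^ 2 := by
      funext x; simp [smul_eq_mul]; ring
    rw [heq]; exact h
  have := hq.convex_lt 8
  simpa [Om] using this

lemma Om_bounded : Bornology.IsBounded Om := by
  apply (Metric.isBounded_ball (x := (0 : E2)) (r := 3)).subset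
  intro x hx
  simp only [Om, Set.mem_setOf_eq] at hx
  rw [Metric.mem_ball, dist_zero_right]
  have hn : ‖x‖ = Real.sqrt (x 0 ^ 2 + x 1 ^ 2) := by
    rw [EuclideanSpace.norm_eq, Fin.sum_univ_two]
    simp [sq_abs]
  rw [hn]
  rw [show (3:ℝ) = Real.sqrt 9 by rw [show (9:ℝ) = 3^2 by norm_num, Real.sqrt_sq]; norm_num]
  apply Real.sqrt_lt_sqrt (by positivity)
  nlinarith [sq_nonneg (x 0), sq_nonneg (x 1)]

lemma Om_nonempty : Om.Nonempty := ⟨0, by simp [Om]⟩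

lemma Om_frontier (x : E2) (hx : x ∈ frontier Om) : uu x = 0 := by
  have hc2 : IsClosed {y : E2 | 3 * (y 0 * y 0) + y 1 * y 1 ≤ 8} :=
    isClosed_le q_cont continuous_const
  have hsub : Om ⊆ {y : E2 | 3 * (y 0 * y 0) + y 1 * y 1 ≤ 8} := by
    intro y hy
    simp only [Om, Set.mem_setOf_eq] at hy
    exact le_of_lt hy
  have hcl : closure Om ⊆ {y : E2 | 3 * (y 0 * y 0) + y 1 * y 1 ≤ 8} :=
    closure_minimal hsub hc2
  have h1 : 3 * (x 0 * x 0) + x 1 * x 1 ≤ 8 := hcl hx.1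
  have h2 : ¬ (3 * (x 0 * x 0) + x 1 * x 1 < 8) := by
    have := hx.2
    rw [Om_open.interior_eq] at this
    exact this
  have : 3 * (x 0 * x 0) + x 1 * x 1 = 8 := le_antisymm h1 (not_lt.mp h2)
  simp only [uu]
  linarith

lemma uu_smooth : ContDiffOn ℝ 2 uu (closure Om) := by
  apply ContDiff.contDiffOn
  have h0 := (EuclideanSpace.proj (𝕜 := ℝ) (0 : Fin 2)).contDiff (n := 2)
  have h1 := (EuclideanSpace.proj (𝕜 := ℝ) (1 : Fin 2)).contDiff (n := 2)
  exact contDiff_const.sub (((contDiff_const.mul (h0.mul h0))).add (contDiff_const.mul (h1.mul h1)))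

noncomputable def M2 : Matrix (Fin 2) (Fin 2) ℝ :=
  Matrix.diagonal ![Real.sqrt (8/3), Real.sqrt 8]

noncomputable def gm : E2 →ₗ[ℝ] E2 := Matrix.toEuclideanLin M2

lemma gm_apply (x : E2) (i : Fin 2) : gm x i = (![Real.sqrt (8/3), Real.sqrt 8] i) * x i := by
  simp [gm, M2, Matrix.toEuclideanLin_apply, Matrix.mulVec_diagonal]
  fin_cases i <;> simp

lemma gm_det : LinearMap.det gm = Real.sqrt (8/3) * Real.sqrt 8 := by
  rw [gm, Matrix.toEuclideanLin_eq_toLin, LinearMap.det_toLin]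
  rw [M2, Matrix.det_diagonal, Fin.prod_univ_two]
  simp

lemma sq_sqrt83 : Real.sqrt (8/3) * Real.sqrt (8/3) = 8/3 :=
  Real.mul_self_sqrt (by norm_num)

lemma sq_sqrt8 : Real.sqrt 8 * Real.sqrt 8 = 8 := Real.mul_self_sqrt (by norm_num)

lemma Om_eq_image : Om = gm '' Metric.ball (0 : E2) 1 := by
  ext x
  constructor
  · intro hx
    simp only [Om, Set.mem_setOf_eq] at hx
    refine ⟨(WithLp.equiv 2 (Fin 2 → ℝ)).symm ![x 0 / Real.sqrt (8/3), x 1 / Real.sqrt 8], ?_, ?_⟩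
    · rw [Metric.mem_ball, dist_zero_right, EuclideanSpace.norm_eq, Fin.sum_univ_two]
      have e0 : ((WithLp.equiv 2 (Fin 2 → ℝ)).symm ![x 0 / Real.sqrt (8/3), x 1 / Real.sqrt 8]) 0
          = x 0 / Real.sqrt (8/3) := rfl
      have e1 : ((WithLp.equiv 2 (Fin 2 → ℝ)).symm ![x 0 / Real.sqrt (8/3), x 1 / Real.sqrt 8]) 1
          = x 1 / Real.sqrt 8 := rfl
      rw [e0, e1]
      rw [show (1:ℝ) = Real.sqrt 1 by simp]
      apply Real.sqrt_lt_sqrt (by positivity)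
      simp only [Real.norm_eq_abs]
      rw [sq_abs, sq_abs, div_pow, div_pow]
      rw [show Real.sqrt (8/3) ^ 2 = 8/3 by rw [sq]; exact sq_sqrt83]
      rw [show Real.sqrt 8 ^ 2 = 8 by rw [sq]; exact sq_sqrt8]
      rw [div_div_eq_mul_div, div_add_div _ _ (by norm_num) (by norm_num)]
      rw [div_lt_one (by norm_num)]
      ring_nf
      ring_nf at hx
      nlinarith [sq_nonneg (x 0), sq_nonneg (x 1)]
    · ext i
      rw [gm_apply]
      fin_cases i
      · show Real.sqrt (8/3) * (x 0 / Real.sqrt (8/3)) = x 0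
        field_simp
      · show Real.sqrt 8 * (x 1 / Real.sqrt 8) = x 1
        field_simp
  · rintro ⟨y, hy, rfl⟩
    simp only [Om, Set.mem_setOf_eq]
    rw [Metric.mem_ball, dist_zero_right, EuclideanSpace.norm_eq, Fin.sum_univ_two] at hy
    rw [gm_apply, gm_apply]
    have h0 : (![Real.sqrt (8/3), Real.sqrt 8] (0:Fin 2)) = Real.sqrt (8/3) := rfl
    have h1 : (![Real.sqrt (8/3), Real.sqrt 8] (1:Fin 2)) = Real.sqrt 8 := rfl
    rw [h0, h1]
    have hy' : (y 0)^2 + (y 1)^2 < 1 := by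
      have h := (Real.sqrt_lt' one_pos).mp hy
      simpa [Real.norm_eq_abs, sq_abs] using h
    nlinarith [sq_sqrt83, sq_sqrt8, sq_nonneg (y 0), sq_nonneg (y 1)]

lemma Om_volume : (volume Om).toReal = Real.sqrt (8/3) * Real.sqrt 8 * π := by
  rw [Om_eq_image, Measure.addHaar_image_linearMap, gm_det,
    EuclideanSpace.volume_ball]
  have hcard : Fintype.card (Fin 2) = 2 := by simp
  rw [hcard]
  have h1 : Real.sqrt π ^ 2 / Real.Gamma ((2:ℕ) / 2 + 1) = π := by
    norm_num [Real.sq_sqrt Real.pi_nonneg, Real.Gamma_two]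
  rw [h1]
  have habs : |Real.sqrt (8/3) * Real.sqrt 8| = Real.sqrt (8/3) * Real.sqrt 8 :=
    abs_of_nonneg (by positivity)
  rw [habs]
  simp only [ENNReal.ofReal_one, one_pow, one_mul]
  rw [← ENNReal.ofReal_mul (by positivity), ENNReal.toReal_ofReal (by positivity)]

lemma key_eq : (3:ℝ) ^ ((3:ℝ)/4) / (4 * Real.sqrt π) * Real.sqrt (Real.sqrt (8/3) * Real.sqrt 8 * π)
    = (3/4) * Real.sqrt (8/3) := by
  have hA : (0:ℝ) ≤ Real.sqrt (8/3) * Real.sqrt 8 * π := by positivity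
  have h3 : Real.sqrt 3 * Real.sqrt (8/3) = Real.sqrt 8 := by
    rw [← Real.sqrt_mul (by norm_num)]; norm_num
  have h4 : Real.sqrt 8 * Real.sqrt 8 = 8 := Real.mul_self_sqrt (by norm_num)
  have h2 : ((3:ℝ) ^ ((3:ℝ)/4))^2 = 3 * Real.sqrt 3 := by
    rw [← Real.rpow_natCast ((3:ℝ) ^ ((3:ℝ)/4)) 2, ← Real.rpow_mul (by norm_num)]
    rw [Real.sqrt_eq_rpow]
    rw [show ((3:ℝ)/4 * (2:ℕ) : ℝ) = 1 + 1/2 by push_cast; ring]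
    rw [Real.rpow_add (by norm_num), Real.rpow_one]
  have hsq : ((3:ℝ) ^ ((3:ℝ)/4) / (4 * Real.sqrt π) * Real.sqrt (Real.sqrt (8/3) * Real.sqrt 8 * π))^2
      = ((3/4) * Real.sqrt (8/3))^2 := by
    rw [mul_pow, Real.sq_sqrt hA, div_pow, mul_pow, Real.sq_sqrt Real.pi_nonneg, h2,
      mul_pow, Real.sq_sqrt (by norm_num : (0:ℝ) ≤ 8/3)]
    have hπ : (0:ℝ) < π := Real.pi_pos
    field_simp
    nlinarith [h3, h4, Real.sqrt_nonneg 3, Real.sqrt_nonneg (8/3), Real.sqrt_nonneg 8, hπ]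
  exact (pow_left_inj₀ (by positivity) (by positivity) (by norm_num)).mp hsq

lemma pt_mem (t : ℝ) (ht0 : 0 < t) (ht1 : t < 1) :
    EuclideanSpace.single (0 : Fin 2) (t * Real.sqrt (8/3)) ∈ Om := by
  have hs := sq_sqrt83
  have hgoal : 3 * ((t * Real.sqrt (8/3)) * (t * Real.sqrt (8/3))) + 0 * 0 < 8 := by
    nlinarith [hs, ht0, ht1, mul_pos ht0 ht0, Real.sqrt_nonneg (8/3)]
  simpa [Om, EuclideanSpace.single_apply] using hgoal

lemma grad_lower (p : E2) : (3/4) * |p 0| ≤ ‖fderiv ℝ uu p‖ := by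
  have h := (fderiv ℝ uu p).le_opNorm (EuclideanSpace.single (0 : Fin 2) 1)
  rw [fderiv_uu p 0, EuclideanSpace.norm_single] at h
  simpa using h

end TorsionAux

/-- The best constant `c` in `‖∇u‖_∞ ≤ c·|Ω|^{1/2}`, valid for all bounded convex
planar domains `Ω` with `u` the torsion function (`-Δu = 1`, `u = 0` on `∂Ω`),
satisfies `c ≥ 3^{3/4}/(4√π)`. -/
theorem torsion_gradient_best_constant_lower_bound (c : ℝ)
    (hc : ∀ Ω : Set (EuclideanSpace ℝ (Fin 2)), Convex ℝ Ω → IsOpen Ω →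
      Bornology.IsBounded Ω → Ω.Nonempty →
      ∀ u : EuclideanSpace ℝ (Fin 2) → ℝ, ContDiffOn ℝ 2 u (closure Ω) →
        (∀ x ∈ Ω, -planeLaplacian u x = 1) →
        (∀ x ∈ frontier Ω, u x = 0) →
        ∀ x ∈ Ω, ‖fderiv ℝ u x‖ ≤ c * Real.sqrt (volume Ω).toReal) :
    (3 : ℝ) ^ ((3 : ℝ) / 4) / (4 * Real.sqrt π) ≤ c := by
  have H := hc Om Om_convex Om_open Om_bounded Om_nonempty uu uu_smooth
    (fun x _ => lap_uu x) Om_frontier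
  set A : ℝ := Real.sqrt ((volume Om).toReal) with hAdef
  set K : ℝ := (3/4) * Real.sqrt (8/3) with hKdef
  have hK0 : 0 < K := by
    rw [hKdef]; positivity
  have hstep : ∀ t : ℝ, 0 < t → t < 1 → t * K ≤ c * A := by
    intro t ht0 ht1
    have hmem := pt_mem t ht0 ht1
    have h1 := grad_lower (EuclideanSpace.single (0 : Fin 2) (t * Real.sqrt (8/3)))
    have h2 := H _ hmem
    have h3 : (EuclideanSpace.single (0 : Fin 2) (t * Real.sqrt (8/3)) : EuclideanSpace ℝ (Fin 2)) 0
        = t * Real.sqrt (8/3) := by simp [EuclideanSpace.single_apply]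
    rw [h3] at h1
    have h4 : |t * Real.sqrt (8/3)| = t * Real.sqrt (8/3) :=
      abs_of_nonneg (by positivity)
    rw [h4] at h1
    calc t * K = (3/4) * (t * Real.sqrt (8/3)) := by rw [hKdef]; ring
      _ ≤ ‖fderiv ℝ uu (EuclideanSpace.single (0 : Fin 2) (t * Real.sqrt (8/3)))‖ := h1
      _ ≤ c * A := h2
  have hKA : K ≤ c * A := by
    by_contra hcon
    push_neg at hcon
    have hhalf : (1/2 : ℝ) * K ≤ c * A := hstep (1/2) (by norm_num) (by norm_num)
    have hcA0 : 0 < c * A := lt_of_lt_of_le (by positivity) hhalf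
    set s : ℝ := c * A / K with hs
    have hs1 : s < 1 := by
      rw [hs, div_lt_one hK0]; exact hcon
    have hs0 : 0 < s := by positivity
    have ht := hstep ((s+1)/2) (by linarith) (by linarith)
    have : (s+1)/2 * K > c * A := by
      have hgt : (s+1)/2 > s := by linarith
      have := mul_lt_mul_of_pos_right hgt hK0
      rw [hs, div_mul_cancel₀ _ (ne_of_gt hK0)] at this
      exact this
    linarith
  -- Now conclude
  have hA0 : 0 < A := by
    rw [hAdef, Om_volume]
    positivity
  have htarget : (3 : ℝ) ^ ((3 : ℝ) / 4) / (4 * Real.sqrt π) * A = K := by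
    rw [hAdef, hKdef, Om_volume]
    exact key_eq
  have := hKA
  rw [← htarget] at this
  exact le_of_mul_le_mul_right (by linarith) hA0
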